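/- The number of extreme points of the LF polytope in a canonical scenario equals [∏_{i ∈ I_F} |O_{x_i=1}|] × |EXT(NS(S_p'))|, where S_p' is the public scenario restricted to input tuples in which no party with a friend selects input 1; i.e., extreme LF behaviours are in bijection with pairs (c, l) of a friend-outcome tuple c and an extreme point l of the restricted no-signalling polytope. -/

import Mathlib

open Finset MeasureTheory

section Framework

variable {I : Type} [Fintype I] [DecidableEq I]
  {M : I → Type} [∀ i, Fintype (M i)] [∀ i, DecidableEq (M i)]
  {O : I → Type} [∀ i, Fintype (O i)] [∀ i, DecidableEq (O i)]

/-- A behaviour: a family of probability distributions over joint outcomes, one per input tuple. -/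
def IsBehaviour (p : (∀ i, M i) → (∀ i, O i) → ℝ) : Prop :=
  (∀ x a, 0 ≤ p x a) ∧ ∀ x, ∑ a, p x a = 1

/-- No-signalling: the marginal over party `i`'s outcome does not depend on party `i`'s input. -/
def NoSignalling (p : (∀ i, M i) → (∀ i, O i) → ℝ) : Prop :=
  ∀ (x x' : ∀ i, M i) (i : I), (∀ j, j ≠ i → x j = x' j) →
    ∀ a : ∀ i, O i,
      ∑ b : O i, p x (Function.update a i b) = ∑ b : O i, p x' (Function.update a i b)

/-- Local hidden variable model (measure-theoretic form): a probability measure on a hidden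
variable space together with local response distributions. -/
def IsLHV (p : (∀ i, M i) → (∀ i, O i) → ℝ) : Prop :=
  ∃ (Λ : Type) (_ : MeasurableSpace Λ) (μ : Measure Λ),
    IsProbabilityMeasure μ ∧
    ∃ R : (i : I) → M i → Λ → O i → ℝ,
      (∀ i xi l a, 0 ≤ R i xi l a) ∧
      (∀ i xi l, ∑ a, R i xi l a = 1) ∧
      (∀ i xi a, Measurable (fun l => R i xi l a)) ∧
      ∀ x a, p x a = ∫ l, (∏ i, R i (x i) l (a i)) ∂μ

/-- Fully deterministic separable model with finitely many hidden variables. -/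
def IsLHVFin (p : (∀ i, M i) → (∀ i, O i) → ℝ) : Prop :=
  ∃ (k : ℕ) (w : Fin k → ℝ) (α : (i : I) → M i → Fin k → O i),
    (∀ l, 0 ≤ w l) ∧ (∑ l, w l = 1) ∧
    ∀ x a, p x a = ∑ l, w l * ∏ i, (if a i = α i (x i) l then (1 : ℝ) else 0)

/-- `J` is a joint probability distribution over all potential outcomes of all measurements of
all parties which reproduces the behaviour `p` by marginalization. -/
def IsJointFor (p : (∀ i, M i) → (∀ i, O i) → ℝ) (J : (∀ i, M i → O i) → ℝ) : Prop :=
  (∀ g, 0 ≤ J g) ∧ (∑ g, J g = 1) ∧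
  ∀ x a, p x a = ∑ g ∈ Finset.univ.filter (fun g : ∀ i, M i → O i => ∀ i, g i (x i) = a i), J g

/-- Local Agency: the marginal on any subset `V` of parties depends only on the inputs of `V`. -/
def LocalAgency (q : (∀ i, M i) → (∀ i, O i) → ℝ) : Prop :=
  ∀ (V : Finset I) (x x' : ∀ i, M i), (∀ i ∈ V, x i = x' i) →
    ∀ a : ∀ i, O i,
      ∑ b ∈ Finset.univ.filter (fun b : ∀ i, O i => ∀ i ∈ V, b i = a i), q x b
        = ∑ b ∈ Finset.univ.filter (fun b : ∀ i, O i => ∀ i ∈ V, b i = a i), q x' b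

/-- Local Friendliness decomposition for friend set `F`, where `one i` is the distinguished
(query) input of party `i`. -/
def IsLF (F : Finset I) (one : ∀ i, M i)
    (p : (∀ i, M i) → (∀ i, O i) → ℝ) : Prop :=
  ∃ (P : (∀ i : {j // j ∈ F}, O i.1) → ℝ)
    (Q : (∀ i : {j // j ∈ F}, O i.1) → (∀ i, M i) → (∀ i, O i) → ℝ),
    (∀ c, 0 ≤ P c) ∧ (∑ c, P c = 1) ∧
    (∀ c x a, 0 ≤ Q c x a) ∧ (∀ c x, ∑ a, Q c x a = 1) ∧
    (∀ c, LocalAgency (Q c)) ∧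
    (∀ c x a, (∃ i : {j // j ∈ F}, x i.1 = one i.1 ∧ a i.1 ≠ c i) → Q c x a = 0) ∧
    ∀ x a, p x a = ∑ c, P c * Q c x a

end Framework

/-- No-signalling behaviours of the public scenario restricted to input tuples in which no
party with a friend (`i ∈ F`) selects the distinguished query input `one i`. -/
def NSRes {I : Type} [Fintype I] [DecidableEq I]
    {M : I → Type} [∀ i, Fintype (M i)] [∀ i, DecidableEq (M i)]
    {O : I → Type} [∀ i, Fintype (O i)] [∀ i, DecidableEq (O i)]
    (F : Finset I) (one : ∀ i, M i)
    (q : {x : ∀ i, M i // ∀ i ∈ F, x i ≠ one i} → (∀ i, O i) → ℝ) : Prop :=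
  (∀ x a, 0 ≤ q x a) ∧ (∀ x, ∑ a, q x a = 1) ∧
  ∀ (x x' : {x : ∀ i, M i // ∀ i ∈ F, x i ≠ one i}) (i : I),
    (∀ j, j ≠ i → x.1 j = x'.1 j) →
    ∀ a : ∀ i, O i,
      ∑ b : O i, q x (Function.update a i b) = ∑ b : O i, q x' (Function.update a i b)

namespace LFCount
set_option linter.unusedSectionVars false
section Chunk1

lemma ite_sum_zero {α : Type*} (s : Finset α) (P : Prop) [Decidable P] (f : α → ℝ) :
    (if P then ∑ b ∈ s, f b else 0) = ∑ b ∈ s, if P then f b else 0 := by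
  split_ifs with h <;> simp

lemma ite_ite_and (P Q : Prop) [Decidable P] [Decidable Q] (v : ℝ) :
    (if P then (if Q then v else 0) else 0) = if P ∧ Q then v else 0 := by
  split_ifs with h1 h2 h3 <;> simp_all

lemma ite_and_mul (P Q : Prop) [Decidable P] [Decidable Q] (v : ℝ) :
    (if P ∧ Q then v else 0) = (if P then (1:ℝ) else 0) * (if Q then v else 0) := by
  split_ifs with h1 h2 h3 <;> simp_all

variable {I : Type} [Fintype I] [DecidableEq I]
  {O : I → Type} [∀ i, Fintype (O i)] [∀ i, DecidableEq (O i)]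

lemma split_coord (j : I) (W : Finset I) (hj : j ∉ W) (a : ∀ i, O i) (f : (∀ i, O i) → ℝ) :
    ∑ b ∈ univ.filter (fun b : ∀ i, O i => ∀ i ∈ W, b i = a i), f b
    = ∑ b ∈ univ.filter (fun b : ∀ i, O i => (∀ i ∈ W, b i = a i) ∧ b j = a j),
        ∑ β : O j, f (Function.update b j β) := by
  symm
  rw [← Finset.sum_product']
  refine Finset.sum_nbij' (i := fun p => Function.update p.1 j p.2)
      (j := fun b => (Function.update b j (a j), b j)) ?_ ?_ ?_ ?_ ?_
  · rintro ⟨b, β⟩ hp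
    simp only [Finset.mem_product, Finset.mem_filter, Finset.mem_univ, true_and] at hp ⊢
    intro i hi
    rw [Function.update_of_ne (fun h : i = j => hj (h ▸ hi))]
    exact hp.1.1 i hi
  · intro b hb
    simp only [Finset.mem_filter, Finset.mem_univ, true_and] at hb
    simp only [Finset.mem_product, Finset.mem_filter, Finset.mem_univ, true_and,
      Finset.mem_univ, and_true]
    refine ⟨fun i hi => ?_, Function.update_self _ _ _⟩
    rw [Function.update_of_ne (fun h : i = j => hj (h ▸ hi))]
    exact hb i hi
  · rintro ⟨b, β⟩ hp
    simp only [Finset.mem_product, Finset.mem_filter, Finset.mem_univ, true_and,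
      Finset.mem_univ, and_true] at hp
    refine Prod.ext ?_ ?_
    · show Function.update (Function.update b j β) j (a j) = b
      funext i
      by_cases hij : i = j
      · subst hij; simp [hp.2.symm]
      · simp [Function.update_of_ne hij]
    · show Function.update b j β j = β
      simp
  · intro b hb
    funext i
    by_cases hij : i = j
    · subst hij; simp
    · simp [Function.update_of_ne hij]
  · rintro ⟨b, β⟩ hp
    rfl

end Chunk1
section Chunk2
variable {I : Type} [Fintype I] [DecidableEq I]
  {M : I → Type} [∀ i, Fintype (M i)] [∀ i, DecidableEq (M i)]
  {O : I → Type} [∀ i, Fintype (O i)] [∀ i, DecidableEq (O i)]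

/-- point-marginal sums equal filtered-marginal sums -/
lemma point_marg (q : (∀ i, O i) → ℝ) (i : I) (a : ∀ i, O i) :
    ∑ β : O i, q (Function.update a i β)
      = ∑ b ∈ univ.filter (fun b : ∀ k, O k => ∀ k ∈ univ.erase i, b k = a k), q b := by
  refine Finset.sum_nbij' (i := fun β => Function.update a i β) (j := fun b => b i)
      ?_ ?_ ?_ ?_ ?_
  · intro β _
    simp only [Finset.mem_filter, Finset.mem_univ, true_and]
    intro k hk
    exact Function.update_of_ne (Finset.ne_of_mem_erase hk) _ _
  · intro b _; exact Finset.mem_univ _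
  · intro β _; simp
  · intro b hb
    simp only [Finset.mem_filter, Finset.mem_univ, true_and] at hb
    show Function.update a i (b i) = b
    funext k
    by_cases hki : k = i
    · subst hki; simp
    · rw [Function.update_of_ne hki]
      exact (hb k (Finset.mem_erase.2 ⟨hki, Finset.mem_univ _⟩)).symm
  · intro β _; rfl

/-- from LocalAgency: single coordinate no-signalling -/
lemma la_single (Q : (∀ i, M i) → (∀ i, O i) → ℝ) (hQ : LocalAgency Q)
    (x x' : ∀ i, M i) (i : I) (h : ∀ j, j ≠ i → x j = x' j) (a : ∀ i, O i) :
    ∑ β : O i, Q x (Function.update a i β) = ∑ β : O i, Q x' (Function.update a i β) := by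
  rw [point_marg, point_marg]
  exact hQ (univ.erase i) x x' (fun j hj => h j (Finset.ne_of_mem_erase hj)) a

variable (F : Finset I) (one : ∀ i, M i)

/-- marginal over `W` of a restricted NS behaviour depends only on inputs in `W` -/
lemma ns_marg (l : {x : ∀ i, M i // ∀ i ∈ F, x i ≠ one i} → (∀ i, O i) → ℝ)
    (hl : NSRes F one l) (W : Finset I) (a : ∀ i, O i) :
    ∀ (T : Finset I) (y y' : {x : ∀ i, M i // ∀ i ∈ F, x i ≠ one i}),
      (∀ i, i ∉ T → y.1 i = y'.1 i) → (∀ i ∈ W, y.1 i = y'.1 i) →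
      ∑ b ∈ univ.filter (fun b : ∀ i, O i => ∀ i ∈ W, b i = a i), l y b
        = ∑ b ∈ univ.filter (fun b : ∀ i, O i => ∀ i ∈ W, b i = a i), l y' b := by
  intro T
  induction T using Finset.induction_on with
  | empty =>
    intro y y' hT _
    have : y = y' := Subtype.ext (funext fun i => hT i (Finset.notMem_empty i))
    rw [this]
  | @insert j T hjT ih =>
    intro y y' hT hW
    by_cases hjv : y.1 j = y'.1 j
    · refine ih y y' (fun i hi => ?_) hW
      by_cases hij : i = j
      · subst hij; exact hjv
      · exact hT i (fun hmem => hi (by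
          rcases Finset.mem_insert.1 hmem with h' | h'
          · exact absurd h' hij
          · exact h'))
    · -- change coordinate j first
      have hjW : j ∉ W := fun hjW => hjv (hW j hjW)
      set ymid : {x : ∀ i, M i // ∀ i ∈ F, x i ≠ one i} :=
        ⟨Function.update y.1 j (y'.1 j), by
          intro i hi
          by_cases hij : i = j
          · subst hij; simp only [Function.update_self]; exact y'.2 i hi
          · rw [Function.update_of_ne hij]; exact y.2 i hi⟩ with hymid
      have step : ∑ b ∈ univ.filter (fun b : ∀ i, O i => ∀ i ∈ W, b i = a i), l y b
          = ∑ b ∈ univ.filter (fun b : ∀ i, O i => ∀ i ∈ W, b i = a i), l ymid b := by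
        rw [split_coord j W hjW a (l y), split_coord j W hjW a (l ymid)]
        refine Finset.sum_congr rfl (fun b _ => ?_)
        refine hl.2.2 y ymid j (fun k hk => ?_) b
        rw [hymid]
        exact (Function.update_of_ne hk _ _).symm
      rw [step]
      refine ih ymid y' (fun i hi => ?_) (fun i hiW => ?_)
      · by_cases hij : i = j
        · subst hij; simp [hymid]
        · rw [hymid]; simp only [Function.update_of_ne hij]
          exact hT i (fun hmem => hi (by
            rcases Finset.mem_insert.1 hmem with h' | h'
            · exact absurd h' hij
            · exact h'))
      · by_cases hij : i = j
        · subst hij; simp [hymid]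
        · rw [hymid]; simp only [Function.update_of_ne hij]
          exact hW i hiW

lemma ns_marg' (l : {x : ∀ i, M i // ∀ i ∈ F, x i ≠ one i} → (∀ i, O i) → ℝ)
    (hl : NSRes F one l) (W : Finset I) (a : ∀ i, O i)
    (y y' : {x : ∀ i, M i // ∀ i ∈ F, x i ≠ one i})
    (hW : ∀ i ∈ W, y.1 i = y'.1 i) :
    ∑ b ∈ univ.filter (fun b : ∀ i, O i => ∀ i ∈ W, b i = a i), l y b
      = ∑ b ∈ univ.filter (fun b : ∀ i, O i => ∀ i ∈ W, b i = a i), l y' b :=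
  ns_marg F one l hl W a univ y y' (fun i hi => absurd (Finset.mem_univ i) hi) hW

end Chunk2
section Chunk3
lemma sum_ite_eq_and {α : Type*} [Fintype α] [DecidableEq α] (z : α) (C : Prop) [Decidable C]
    (v : ℝ) : (∑ b : α, if b = z ∧ C then v else 0) = if C then v else 0 := by
  by_cases hC : C <;> simp [hC]

variable {I : Type} [Fintype I] [DecidableEq I]
  {M : I → Type} [∀ i, Fintype (M i)] [∀ i, DecidableEq (M i)]
  {O : I → Type} [∀ i, Fintype (O i)] [∀ i, DecidableEq (O i)]
  (F : Finset I) (one : ∀ i, M i)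

/-- the "friendly" behaviours compatible with fixed friend outcomes `c` -/
def MemK (c : ∀ i : {j // j ∈ F}, O i.1) (Q : (∀ i, M i) → (∀ i, O i) → ℝ) : Prop :=
  (∀ x a, 0 ≤ Q x a) ∧ (∀ x, ∑ a, Q x a = 1) ∧ LocalAgency Q ∧
    ∀ x a, (∃ i : {j // j ∈ F}, x i.1 = one i.1 ∧ a i.1 ≠ c i) → Q x a = 0

variable [∀ i, Nonempty (O i)]

noncomputable def lift (c : ∀ i : {j // j ∈ F}, O i.1) : ∀ i, O i :=
  fun i => if h : i ∈ F then c ⟨i, h⟩ else Classical.arbitrary _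

variable (other : ∀ i, M i) (hother : ∀ i, other i ≠ one i)

def subx (x : ∀ i, M i) : {x : ∀ i, M i // ∀ i ∈ F, x i ≠ one i} :=
  ⟨fun i => if i ∈ F ∧ x i = one i then other i else x i, by
    intro i hi
    by_cases h : x i = one i
    · simp only [hi, h, and_self, if_true]
      exact hother i
    · simp only [h, and_false, if_false]
      exact h⟩

noncomputable def extQ (c : ∀ i : {j // j ∈ F}, O i.1)
    (l : {x : ∀ i, M i // ∀ i ∈ F, x i ≠ one i} → (∀ i, O i) → ℝ) :
    (∀ i, M i) → (∀ i, O i) → ℝ :=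
  fun x a => ∑ b ∈ univ.filter
      (fun b : ∀ i, O i =>
        ∀ i, if i ∈ F ∧ x i = one i then a i = lift F c i else b i = a i),
    l (subx F one other hother x) b

/-- the per-pair condition pins down the first argument -/
lemma cond_iff (c : ∀ i : {j // j ∈ F}, O i.1) (x : ∀ i, M i) (b' b : ∀ i, O i) :
    (∀ i, if i ∈ F ∧ x i = one i then b' i = lift F c i else b i = b' i)
      ↔ b' = (fun i => if i ∈ F ∧ x i = one i then lift F c i else b i) := by
  constructor
  · intro h
    funext i
    have := h i
    by_cases hi : i ∈ F ∧ x i = one i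
    · rw [if_pos hi] at this ⊢; exact this
    · rw [if_neg hi] at this ⊢; exact this.symm
  · intro h i
    subst h
    by_cases hi : i ∈ F ∧ x i = one i
    · simp only [if_pos hi]
    · simp only [if_neg hi]

lemma extQ_marginal (c : ∀ i : {j // j ∈ F}, O i.1)
    (l : {x : ∀ i, M i // ∀ i ∈ F, x i ≠ one i} → (∀ i, O i) → ℝ)
    (x : ∀ i, M i) (V : Finset I) (a : ∀ i, O i) :
    ∑ b' ∈ univ.filter (fun b' : ∀ i, O i => ∀ i ∈ V, b' i = a i),
        extQ F one other hother c l x b'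
    = (if ∀ i ∈ V, (i ∈ F ∧ x i = one i) → a i = lift F c i then (1:ℝ) else 0) *
      ∑ b ∈ univ.filter (fun b : ∀ i, O i => ∀ i ∈ V, ¬(i ∈ F ∧ x i = one i) → b i = a i),
        l (subx F one other hother x) b := by
  classical
  simp only [extQ, Finset.sum_filter]
  simp only [ite_sum_zero, ite_ite_and]
  rw [Finset.sum_comm]
  have key : ∀ b : ∀ i, O i,
      (∑ b' : ∀ i, O i,
        if (∀ i ∈ V, b' i = a i) ∧
            (∀ i, if i ∈ F ∧ x i = one i then b' i = lift F c i else b i = b' i)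
          then l (subx F one other hother x) b else 0)
      = if ((∀ i ∈ V, (i ∈ F ∧ x i = one i) → a i = lift F c i)
            ∧ (∀ i ∈ V, ¬(i ∈ F ∧ x i = one i) → b i = a i))
        then l (subx F one other hother x) b else 0 := by
    intro b
    set bb : ∀ i, O i := fun i => if i ∈ F ∧ x i = one i then lift F c i else b i with hbb
    have hc : ∀ b' : ∀ i, O i,
        ((∀ i ∈ V, b' i = a i) ∧
          (∀ i, if i ∈ F ∧ x i = one i then b' i = lift F c i else b i = b' i))
        ↔ (b' = bb ∧
            ((∀ i ∈ V, (i ∈ F ∧ x i = one i) → a i = lift F c i)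
              ∧ (∀ i ∈ V, ¬(i ∈ F ∧ x i = one i) → b i = a i))) := by
      intro b'
      rw [cond_iff]
      constructor
      · rintro ⟨hV, rfl⟩
        refine ⟨rfl, fun i hi hqi => ?_, fun i hi hqi => ?_⟩
        · rw [← hV i hi]; simp only [if_pos hqi]
        · rw [← hV i hi]; simp only [if_neg hqi]
      · rintro ⟨rfl, hA, hB⟩
        refine ⟨fun i hi => ?_, rfl⟩
        by_cases hqi : i ∈ F ∧ x i = one i
        · simp only [hbb, if_pos hqi]; exact (hA i hi hqi).symm
        · simp only [hbb, if_neg hqi]; exact hB i hi hqi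
    calc (∑ b' : ∀ i, O i,
        if (∀ i ∈ V, b' i = a i) ∧
            (∀ i, if i ∈ F ∧ x i = one i then b' i = lift F c i else b i = b' i)
          then l (subx F one other hother x) b else 0)
        = ∑ b' : ∀ i, O i,
            if b' = bb ∧
              ((∀ i ∈ V, (i ∈ F ∧ x i = one i) → a i = lift F c i)
                ∧ (∀ i ∈ V, ¬(i ∈ F ∧ x i = one i) → b i = a i))
            then l (subx F one other hother x) b else 0 := by
          refine Finset.sum_congr rfl (fun b' _ => ?_)
          rw [if_congr (hc b') rfl rfl]
      _ = _ := sum_ite_eq_and bb _ _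
  calc _ = ∑ b : ∀ i, O i,
        if ((∀ i ∈ V, (i ∈ F ∧ x i = one i) → a i = lift F c i)
            ∧ (∀ i ∈ V, ¬(i ∈ F ∧ x i = one i) → b i = a i))
          then l (subx F one other hother x) b else 0 :=
        Finset.sum_congr rfl (fun b _ => key b)
    _ = _ := by
        simp only [ite_and_mul]
        rw [← Finset.mul_sum, ← Finset.sum_filter]


end Chunk3
namespace Part2
open LFCount
variable {I : Type} [Fintype I] [DecidableEq I]
  {M : I → Type} [∀ i, Fintype (M i)] [∀ i, DecidableEq (M i)]
  {O : I → Type} [∀ i, Fintype (O i)] [∀ i, DecidableEq (O i)]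
  (F : Finset I) (one : ∀ i, M i)
  [∀ i, Nonempty (O i)]
  (other : ∀ i, M i) (hother : ∀ i, other i ≠ one i)

lemma lift_mem (c : ∀ i : {j // j ∈ F}, O i.1) (i : {j // j ∈ F}) :
    lift F c i.1 = c i := by
  simp only [lift, dif_pos i.2]

lemma subx_eq_self (x : {x : ∀ i, M i // ∀ i ∈ F, x i ≠ one i}) :
    subx F one other hother x.1 = x := by
  refine Subtype.ext (funext fun i => ?_)
  exact if_neg (fun h => x.2 i h.1 h.2)

lemma subx_agree (x : ∀ i, M i) (i : I) (h : ¬(i ∈ F ∧ x i = one i)) :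
    (subx F one other hother x).1 i = x i := if_neg h

/-- restriction of a behaviour to the restricted scenario -/
def resQ (Q : (∀ i, M i) → (∀ i, O i) → ℝ) :
    {x : ∀ i, M i // ∀ i ∈ F, x i ≠ one i} → (∀ i, O i) → ℝ :=
  fun y b => Q y.1 b

lemma res_extQ (c : ∀ i : {j // j ∈ F}, O i.1)
    (l : {x : ∀ i, M i // ∀ i ∈ F, x i ≠ one i} → (∀ i, O i) → ℝ) :
    resQ F one (extQ F one other hother c l) = l := by
  funext x a
  show extQ F one other hother c l x.1 a = l x a
  rw [extQ]
  have hq : ∀ i, ¬(i ∈ F ∧ x.1 i = one i) := fun i h => x.2 i h.1 h.2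
  have hfil : (univ.filter (fun b : ∀ i, O i =>
      ∀ i, if i ∈ F ∧ x.1 i = one i then a i = lift F c i else b i = a i)) = {a} := by
    ext b
    simp only [Finset.mem_filter, Finset.mem_univ, true_and, Finset.mem_singleton]
    constructor
    · intro h
      funext i
      have := h i
      rwa [if_neg (hq i)] at this
    · rintro rfl i
      rw [if_neg (hq i)]
  rw [hfil, Finset.sum_singleton, subx_eq_self]

lemma extQ_apply (c : ∀ i : {j // j ∈ F}, O i.1)
    (l : {x : ∀ i, M i // ∀ i ∈ F, x i ≠ one i} → (∀ i, O i) → ℝ)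
    (x : ∀ i, M i) (a : ∀ i, O i) :
    extQ F one other hother c l x a
    = (if ∀ i ∈ Finset.univ, (i ∈ F ∧ x i = one i) → a i = lift F c i then (1:ℝ) else 0) *
      ∑ b ∈ univ.filter
          (fun b : ∀ i, O i => ∀ i ∈ Finset.univ, ¬(i ∈ F ∧ x i = one i) → b i = a i),
        l (subx F one other hother x) b := by
  have h := extQ_marginal F one other hother c l x Finset.univ a
  have hfil : (univ.filter (fun b' : ∀ i, O i => ∀ i ∈ Finset.univ, b' i = a i)) = {a} := by
    ext b'
    simp [funext_iff]
  rw [hfil, Finset.sum_singleton] at h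
  exact h

lemma extQ_nonneg (c : ∀ i : {j // j ∈ F}, O i.1)
    (l : {x : ∀ i, M i // ∀ i ∈ F, x i ≠ one i} → (∀ i, O i) → ℝ)
    (hl0 : ∀ y b, 0 ≤ l y b) (x : ∀ i, M i) (a : ∀ i, O i) :
    0 ≤ extQ F one other hother c l x a :=
  Finset.sum_nonneg (fun b _ => hl0 _ b)

lemma extQ_norm (c : ∀ i : {j // j ∈ F}, O i.1)
    (l : {x : ∀ i, M i // ∀ i ∈ F, x i ≠ one i} → (∀ i, O i) → ℝ)
    (hl1 : ∀ y, ∑ b, l y b = 1) (x : ∀ i, M i) :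
    ∑ a, extQ F one other hother c l x a = 1 := by
  have a0 : ∀ i, O i := Classical.arbitrary _
  have h := extQ_marginal F one other hother c l x ∅ a0
  have h1 : (univ.filter (fun b' : ∀ i, O i => ∀ i ∈ (∅ : Finset I), b' i = a0 i)) = univ := by
    apply Finset.filter_true_of_mem; intro b _; intro i hi; exact absurd hi (Finset.notMem_empty i)
  have h2 : (univ.filter (fun b : ∀ i, O i =>
      ∀ i ∈ (∅ : Finset I), ¬(i ∈ F ∧ x i = one i) → b i = a0 i)) = univ := by
    apply Finset.filter_true_of_mem; intro b _; intro i hi; exact absurd hi (Finset.notMem_empty i)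
  rw [h1, h2] at h
  rw [h, if_pos (fun i hi => absurd hi (Finset.notMem_empty i)), one_mul, hl1]

lemma extQ_zero (c : ∀ i : {j // j ∈ F}, O i.1)
    (l : {x : ∀ i, M i // ∀ i ∈ F, x i ≠ one i} → (∀ i, O i) → ℝ)
    (x : ∀ i, M i) (a : ∀ i, O i)
    (h : ∃ i : {j // j ∈ F}, x i.1 = one i.1 ∧ a i.1 ≠ c i) :
    extQ F one other hother c l x a = 0 := by
  obtain ⟨i, hx, ha⟩ := h
  rw [extQ, Finset.sum_filter]
  refine Finset.sum_eq_zero (fun b _ => ?_)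
  rw [if_neg]
  intro hcond
  have := hcond i.1
  rw [if_pos ⟨i.2, hx⟩] at this
  rw [lift_mem] at this
  exact ha this

lemma extQ_la (c : ∀ i : {j // j ∈ F}, O i.1)
    (l : {x : ∀ i, M i // ∀ i ∈ F, x i ≠ one i} → (∀ i, O i) → ℝ)
    (hl : NSRes F one l) : LocalAgency (extQ F one other hother c l) := by
  intro V x x' hxx' a
  rw [extQ_marginal, extQ_marginal]
  have hqr : ∀ i ∈ V, ((i ∈ F ∧ x i = one i) ↔ (i ∈ F ∧ x' i = one i)) := by
    intro i hi
    rw [hxx' i hi]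
  congr 1
  · apply if_congr _ rfl rfl
    constructor
    · intro h i hi hq
      exact h i hi ((hqr i hi).2 hq)
    · intro h i hi hq
      exact h i hi ((hqr i hi).1 hq)
  · set W : Finset I := V.filter (fun i => ¬(i ∈ F ∧ x i = one i)) with hW
    have e1 : (univ.filter (fun b : ∀ i, O i => ∀ i ∈ V, ¬(i ∈ F ∧ x i = one i) → b i = a i))
        = univ.filter (fun b : ∀ i, O i => ∀ i ∈ W, b i = a i) := by
      apply Finset.filter_congr
      intro b _
      constructor
      · intro h i hi
        rw [hW, Finset.mem_filter] at hi
        exact h i hi.1 hi.2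
      · intro h i hi hq
        exact h i (by rw [hW, Finset.mem_filter]; exact ⟨hi, hq⟩)
    have e2 : (univ.filter (fun b : ∀ i, O i => ∀ i ∈ V, ¬(i ∈ F ∧ x' i = one i) → b i = a i))
        = univ.filter (fun b : ∀ i, O i => ∀ i ∈ W, b i = a i) := by
      apply Finset.filter_congr
      intro b _
      constructor
      · intro h i hi
        rw [hW, Finset.mem_filter] at hi
        exact h i hi.1 (fun hq => hi.2 ((hqr i hi.1).2 hq))
      · intro h i hi hq
        refine h i ?_
        rw [hW, Finset.mem_filter]
        exact ⟨hi, fun hq' => hq ((hqr i hi).1 hq')⟩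
    rw [e1, e2]
    refine ns_marg' F one l hl W a _ _ (fun i hi => ?_)
    rw [hW, Finset.mem_filter] at hi
    have hx : ¬(i ∈ F ∧ x i = one i) := hi.2
    have hx' : ¬(i ∈ F ∧ x' i = one i) := fun hq => hx ((hqr i hi.1).2 hq)
    rw [subx_agree F one other hother x i hx, subx_agree F one other hother x' i hx']
    exact hxx' i hi.1

end Part2

namespace Part3
open LFCount Part2
set_option linter.unusedSectionVars false
variable {I : Type} [Fintype I] [DecidableEq I]
  {M : I → Type} [∀ i, Fintype (M i)] [∀ i, DecidableEq (M i)]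
  {O : I → Type} [∀ i, Fintype (O i)] [∀ i, DecidableEq (O i)]
  (F : Finset I) (one : ∀ i, M i)
  [∀ i, Nonempty (O i)]
  (other : ∀ i, M i) (hother : ∀ i, other i ≠ one i)

lemma memK_extQ (c : ∀ i : {j // j ∈ F}, O i.1)
    (l : {x : ∀ i, M i // ∀ i ∈ F, x i ≠ one i} → (∀ i, O i) → ℝ)
    (hl : NSRes F one l) : MemK F one c (extQ F one other hother c l) :=
  ⟨extQ_nonneg F one other hother c l hl.1,
   extQ_norm F one other hother c l hl.2.1,
   extQ_la F one other hother c l hl,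
   fun x a h => extQ_zero F one other hother c l x a h⟩

lemma res_memK (c : ∀ i : {j // j ∈ F}, O i.1)
    (Q : (∀ i, M i) → (∀ i, O i) → ℝ) (hQ : MemK F one c Q) :
    NSRes F one (resQ F one Q) := by
  refine ⟨fun y b => hQ.1 y.1 b, fun y => hQ.2.1 y.1, fun y y' i h a => ?_⟩
  exact la_single Q hQ.2.2.1 y.1 y'.1 i h a

lemma extQ_res (c : ∀ i : {j // j ∈ F}, O i.1)
    (Q : (∀ i, M i) → (∀ i, O i) → ℝ) (hQ : MemK F one c Q) :
    extQ F one other hother c (resQ F one Q) = Q := by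
  funext x a
  rw [extQ_apply]
  by_cases hA : ∀ i ∈ Finset.univ, (i ∈ F ∧ x i = one i) → a i = lift F c i
  · rw [if_pos hA, one_mul]
    set W : Finset I := univ.filter (fun i => ¬(i ∈ F ∧ x i = one i)) with hW
    have e1 : (univ.filter (fun b : ∀ i, O i =>
        ∀ i ∈ Finset.univ, ¬(i ∈ F ∧ x i = one i) → b i = a i))
        = univ.filter (fun b : ∀ i, O i => ∀ i ∈ W, b i = a i) := by
      apply Finset.filter_congr
      intro b _
      constructor
      · intro h i hi
        rw [hW, Finset.mem_filter] at hi
        exact h i hi.1 hi.2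
      · intro h i hi hq
        exact h i (by rw [hW, Finset.mem_filter]; exact ⟨hi, hq⟩)
    rw [e1]
    have hla := hQ.2.2.1 W (subx F one other hother x).1 x (fun i hi => by
      rw [hW, Finset.mem_filter] at hi
      exact subx_agree F one other hother x i hi.2) a
    show ∑ b ∈ univ.filter (fun b : ∀ i, O i => ∀ i ∈ W, b i = a i),
        Q (subx F one other hother x).1 b = Q x a
    rw [hla]
    refine Finset.sum_eq_single_of_mem a ?_ ?_
    · simp
    · intro b hb hba
      simp only [Finset.mem_filter, Finset.mem_univ, true_and] at hb
      obtain ⟨i, hi⟩ := Function.ne_iff.1 hba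
      have hqi : i ∈ F ∧ x i = one i := by
        by_contra hq
        exact hi (hb i (by rw [hW, Finset.mem_filter]; exact ⟨Finset.mem_univ i, hq⟩))
      refine hQ.2.2.2 x b ⟨⟨i, hqi.1⟩, hqi.2, ?_⟩
      rw [← lift_mem F c ⟨i, hqi.1⟩]
      have ha := hA i (Finset.mem_univ i) hqi
      simpa [← ha] using hi
  · rw [if_neg hA, zero_mul]
    push_neg at hA
    obtain ⟨i, _, hqi, hai⟩ := hA
    refine (hQ.2.2.2 x a ⟨⟨i, hqi.1⟩, hqi.2, ?_⟩).symm
    have hlm := lift_mem F c ⟨i, hqi.1⟩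
    rw [← hlm]
    exact hai

lemma extQ_lin (c : ∀ i : {j // j ∈ F}, O i.1)
    (l₁ l₂ : {x : ∀ i, M i // ∀ i ∈ F, x i ≠ one i} → (∀ i, O i) → ℝ) (t u : ℝ) :
    extQ F one other hother c (t • l₁ + u • l₂)
      = t • extQ F one other hother c l₁ + u • extQ F one other hother c l₂ := by
  funext x a
  simp only [extQ, Pi.add_apply, Pi.smul_apply, smul_eq_mul]
  rw [Finset.sum_add_distrib, Finset.mul_sum, Finset.mul_sum]

lemma resQ_lin (Q₁ Q₂ : (∀ i, M i) → (∀ i, O i) → ℝ) (t u : ℝ) :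
    resQ F one (t • Q₁ + u • Q₂) = t • resQ F one Q₁ + u • resQ F one Q₂ := rfl

/-- the uniform restricted behaviour -/
noncomputable def unifR : {x : ∀ i, M i // ∀ i ∈ F, x i ≠ one i} → (∀ i, O i) → ℝ :=
  fun _ _ => (Fintype.card (∀ i, O i) : ℝ)⁻¹

lemma unifR_ns : NSRes F one (unifR F one (O := O)) := by
  have hpos : (0:ℝ) < (Fintype.card (∀ i, O i) : ℝ) := by
    exact_mod_cast Fintype.card_pos
  refine ⟨fun y b => inv_nonneg.2 (le_of_lt hpos), fun y => ?_, fun y y' i h a => ?_⟩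
  · show ∑ _a : ∀ i, O i, (Fintype.card (∀ i, O i) : ℝ)⁻¹ = 1
    rw [Finset.sum_const, Finset.card_univ, nsmul_eq_mul, mul_inv_cancel₀ (ne_of_gt hpos)]
  · rfl

end Part3

namespace Part4
open LFCount Part2 Part3
set_option linter.unusedSectionVars false
variable {I : Type} [Fintype I] [DecidableEq I]
  {M : I → Type} [∀ i, Fintype (M i)] [∀ i, DecidableEq (M i)]
  {O : I → Type} [∀ i, Fintype (O i)] [∀ i, DecidableEq (O i)]
  (F : Finset I) (one : ∀ i, M i)
  [∀ i, Nonempty (O i)]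
  (other : ∀ i, M i) (hother : ∀ i, other i ≠ one i)

include other hother in
lemma memK_isLF (c : ∀ i : {j // j ∈ F}, O i.1)
    (Q : (∀ i, M i) → (∀ i, O i) → ℝ) (hQ : MemK F one c Q) : IsLF F one Q := by
  classical
  have hKdef : ∀ c', MemK F one c'
      (extQ F one other hother c' (unifR F one (M := M) (O := O))) :=
    fun c' => memK_extQ F one other hother c' _ (unifR_ns F one)
  refine ⟨fun c' => if c' = c then 1 else 0,
    fun c' => if h : c' = c then Q else extQ F one other hother c' (unifR F one),
    ?_, ?_, ?_, ?_, ?_, ?_, ?_⟩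
  · intro c'; dsimp only; split_ifs <;> norm_num
  · simp
  · intro c' x a
    by_cases h : c' = c
    · dsimp only; rw [dif_pos h]; exact hQ.1 x a
    · dsimp only; rw [dif_neg h]; exact (hKdef c').1 x a
  · intro c' x
    by_cases h : c' = c
    · dsimp only; rw [dif_pos h]; exact hQ.2.1 x
    · dsimp only; rw [dif_neg h]; exact (hKdef c').2.1 x
  · intro c'
    by_cases h : c' = c
    · dsimp only; rw [dif_pos h]; exact hQ.2.2.1
    · dsimp only; rw [dif_neg h]; exact (hKdef c').2.2.1
  · intro c' x a hex
    by_cases h : c' = c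
    · subst h; dsimp only; rw [dif_pos rfl]; exact hQ.2.2.2 x a hex
    · dsimp only; rw [dif_neg h]; exact (hKdef c').2.2.2 x a hex
  · intro x a
    have : ∀ c', (if c' = c then (1:ℝ) else 0) *
        (if h : c' = c then Q else extQ F one other hother c' (unifR F one)) x a
        = if c' = c then Q x a else 0 := by
      intro c'
      by_cases h : c' = c
      · rw [if_pos h, dif_pos h, one_mul, if_pos h]
      · rw [if_neg h, dif_neg h, zero_mul, if_neg h]
    rw [Finset.sum_congr rfl (fun c' _ => this c')]
    rw [Finset.sum_ite_eq' Finset.univ c (fun _ => Q x a), if_pos (Finset.mem_univ c)]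

lemma isLF_nonneg (p : (∀ i, M i) → (∀ i, O i) → ℝ) (h : IsLF F one p) :
    ∀ x a, 0 ≤ p x a := by
  obtain ⟨P, Q, hP0, _, hQ0, _, _, _, hdec⟩ := h
  intro x a
  rw [hdec]
  exact Finset.sum_nonneg fun c _ => mul_nonneg (hP0 c) (hQ0 c x a)

lemma memK_unique (c c' : ∀ i : {j // j ∈ F}, O i.1)
    (p : (∀ i, M i) → (∀ i, O i) → ℝ)
    (h : MemK F one c p) (h' : MemK F one c' p) : c = c' := by
  funext i
  by_contra hne
  have hz : ∀ a : ∀ i, O i, p one a = 0 := by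
    intro a
    by_cases hc : a i.1 = c i
    · exact h'.2.2.2 one a ⟨i, rfl, fun heq => hne (by rw [← hc, heq])⟩
    · exact h.2.2.2 one a ⟨i, rfl, hc⟩
  have hn := h.2.1 one
  rw [Finset.sum_eq_zero (fun a _ => hz a)] at hn
  norm_num at hn

include other hother in
lemma extreme_memK (p : (∀ i, M i) → (∀ i, O i) → ℝ)
    (hp : p ∈ Set.extremePoints ℝ {p : (∀ i, M i) → (∀ i, O i) → ℝ | IsLF F one p}) :
    ∃ c, MemK F one c p := by
  classical
  obtain ⟨P, Q, hP0, hP1, hQ0, hQ1, hQla, hQz, hdec⟩ := hp.1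
  obtain ⟨c0, -, hc0⟩ := Finset.exists_ne_zero_of_sum_ne_zero
    (s := Finset.univ) (f := P) (by rw [hP1]; norm_num)
  have hc0pos : 0 < P c0 := (hP0 c0).lt_of_ne (Ne.symm hc0)
  have hQmem : ∀ c', MemK F one c' (Q c') := fun c' => ⟨hQ0 c', hQ1 c', hQla c', hQz c'⟩
  have herase : ∑ c' ∈ Finset.univ.erase c0, P c' = 1 - P c0 := by
    have := Finset.add_sum_erase Finset.univ P (Finset.mem_univ c0)
    rw [hP1] at this
    linarith
  by_cases h1 : P c0 = 1
  · have hzero : ∀ c', c' ≠ c0 → P c' = 0 := by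
      intro c' hne
      have hsum : ∑ c' ∈ Finset.univ.erase c0, P c' = 0 := by rw [herase, h1]; ring
      exact (Finset.sum_eq_zero_iff_of_nonneg (fun c'' _ => hP0 c'')).1 hsum c'
        (Finset.mem_erase.2 ⟨hne, Finset.mem_univ c'⟩)
    have hpQ : p = Q c0 := by
      funext x a
      rw [hdec x a, Finset.sum_eq_single c0
        (fun c'' _ hne => by rw [hzero c'' hne, zero_mul])
        (fun h => absurd (Finset.mem_univ c0) h), h1, one_mul]
    exact ⟨c0, hpQ ▸ hQmem c0⟩
  · have hle : P c0 ≤ 1 := by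
      rw [← hP1]
      exact Finset.single_le_sum (fun c'' _ => hP0 c'') (Finset.mem_univ c0)
    have h1' : P c0 < 1 := lt_of_le_of_ne hle h1
    have hu0 : 0 < 1 - P c0 := by linarith
    set u := 1 - P c0 with hu
    set P' : (∀ i : {j // j ∈ F}, O i.1) → ℝ :=
      fun c' => if c' = c0 then 0 else P c' / u with hP'
    set q' : (∀ i, M i) → (∀ i, O i) → ℝ := fun x a => ∑ c', P' c' * Q c' x a with hq'
    have hP'1 : ∑ c', P' c' = 1 := by
      have h2 : ∑ c' ∈ Finset.univ.erase c0, P' c' = ∑ c' ∈ Finset.univ.erase c0, P c' / u :=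
        Finset.sum_congr rfl (fun c'' hcc => by
          simp only [hP', if_neg (Finset.mem_erase.1 hcc).1])
      have h0 : P' c0 = 0 := by simp only [hP', if_pos rfl]
      have h3 := Finset.add_sum_erase Finset.univ P' (Finset.mem_univ c0)
      rw [← h3, h0, zero_add, h2, ← Finset.sum_div, herase]
      exact div_self (ne_of_gt hu0)
    have hP'0 : ∀ c', 0 ≤ P' c' := by
      intro c'
      simp only [hP']
      split_ifs
      · exact le_refl 0
      · exact div_nonneg (hP0 _) hu0.le
    have hq'LF : IsLF F one q' :=
      ⟨P', Q, hP'0, hP'1, hQ0, hQ1, hQla, hQz, fun x a => rfl⟩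
    have hseg : p ∈ openSegment ℝ (Q c0) q' := by
      refine ⟨P c0, u, hc0pos, hu0, by rw [hu]; ring, ?_⟩
      funext x a
      simp only [Pi.add_apply, Pi.smul_apply, smul_eq_mul]
      rw [hdec x a]
      have hx : u * q' x a = ∑ c' ∈ Finset.univ.erase c0, P c' * Q c' x a := by
        rw [hq']
        dsimp only
        rw [Finset.mul_sum]
        have : ∀ c', u * (P' c' * Q c' x a) = if c' = c0 then 0 else P c' * Q c' x a := by
          intro c'
          simp only [hP']
          split_ifs with h
          · ring
          · field_simp
        rw [Finset.sum_congr rfl (fun c' _ => this c')]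
        rw [← Finset.add_sum_erase Finset.univ _ (Finset.mem_univ c0), if_pos rfl, zero_add]
        exact Finset.sum_congr rfl (fun c'' hcc => by rw [if_neg (Finset.mem_erase.1 hcc).1])
      rw [hx, ← Finset.add_sum_erase Finset.univ (fun c' => P c' * Q c' x a)
        (Finset.mem_univ c0)]
    have hres := hp.2 (memK_isLF F one other hother c0 (Q c0) (hQmem c0)) hq'LF hseg
    exact ⟨c0, hres ▸ hQmem c0⟩

end Part4

namespace Part5
open LFCount Part2 Part3 Part4
set_option linter.unusedSectionVars false
variable {I : Type} [Fintype I] [DecidableEq I]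
  {M : I → Type} [∀ i, Fintype (M i)] [∀ i, DecidableEq (M i)]
  {O : I → Type} [∀ i, Fintype (O i)] [∀ i, DecidableEq (O i)]
  (F : Finset I) (one : ∀ i, M i)
  [∀ i, Nonempty (O i)]
  (other : ∀ i, M i) (hother : ∀ i, other i ≠ one i)

include other hother in
lemma zero_dominated_memK (c : ∀ i : {j // j ∈ F}, O i.1)
    (p s : (∀ i, M i) → (∀ i, O i) → ℝ) (hpK : MemK F one c p)
    (hs : IsLF F one s) (hzero : ∀ x a, p x a = 0 → s x a = 0) :
    MemK F one c s := by
  obtain ⟨P, Q, hP0, hP1, hQ0, hQ1, hQla, hQz, hdec⟩ := hs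
  have hPzero : ∀ c', c' ≠ c → P c' = 0 := by
    intro c' hne
    obtain ⟨i, hi⟩ : ∃ i, c' i ≠ c i := by
      by_contra hno; push_neg at hno; exact hne (funext hno)
    set S : Finset (∀ k, O k) := univ.filter (fun a : ∀ k, O k => a i.1 = c' i) with hS
    have h1 : ∀ a ∈ S, s one a = 0 := by
      intro a ha
      refine hzero one a (hpK.2.2.2 one a ⟨i, rfl, ?_⟩)
      rw [(Finset.mem_filter.1 ha).2]
      exact hi
    have h2 : ∑ a ∈ S, Q c' one a = 1 := by
      have hsplit := Finset.sum_filter_add_sum_filter_not Finset.univ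
        (fun a : ∀ k, O k => a i.1 = c' i) (Q c' one)
      have hnot : ∑ a ∈ univ.filter (fun a : ∀ k, O k => ¬ a i.1 = c' i), Q c' one a = 0 :=
        Finset.sum_eq_zero (fun a ha =>
          hQz c' one a ⟨i, rfl, (Finset.mem_filter.1 ha).2⟩)
      rw [hnot, add_zero] at hsplit
      rw [hS, hsplit, hQ1]
    have h4 : P c' ≤ ∑ a ∈ S, s one a := by
      calc P c' = ∑ a ∈ S, P c' * Q c' one a := by rw [← Finset.mul_sum, h2, mul_one]
        _ ≤ ∑ a ∈ S, s one a := by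
            refine Finset.sum_le_sum (fun a _ => ?_)
            rw [hdec one a]
            exact Finset.single_le_sum
              (fun c'' _ => mul_nonneg (hP0 c'') (hQ0 c'' one a)) (Finset.mem_univ c')
    rw [Finset.sum_eq_zero h1] at h4
    exact le_antisymm h4 (hP0 c')
  have hPc : P c = 1 := by
    rw [← hP1]
    symm
    exact Finset.sum_eq_single c (fun c'' _ hne => hPzero c'' hne)
      (fun h => absurd (Finset.mem_univ c) h)
  have hsQ : s = Q c := by
    funext x a
    rw [hdec x a, Finset.sum_eq_single c
      (fun c'' _ hne => by rw [hPzero c'' hne, zero_mul])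
      (fun h => absurd (Finset.mem_univ c) h), hPc, one_mul]
  rw [hsQ]
  exact ⟨hQ0 c, hQ1 c, hQla c, hQz c⟩

include other hother in
lemma extQ_extreme (c : ∀ i : {j // j ∈ F}, O i.1)
    (l : {x : ∀ i, M i // ∀ i ∈ F, x i ≠ one i} → (∀ i, O i) → ℝ)
    (hl : l ∈ Set.extremePoints ℝ
      {q : {x : ∀ i, M i // ∀ i ∈ F, x i ≠ one i} → (∀ i, O i) → ℝ | NSRes F one q}) :
    extQ F one other hother c l ∈ Set.extremePoints ℝ
      {p : (∀ i, M i) → (∀ i, O i) → ℝ | IsLF F one p} := by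
  have hlNS : NSRes F one l := hl.1
  have hK : MemK F one c (extQ F one other hother c l) :=
    memK_extQ F one other hother c l hlNS
  refine ⟨memK_isLF F one other hother c _ hK, ?_⟩
  rintro q hq r hr ⟨t, u, ht, hu, htu, hsum⟩
  have key0 : ∀ x a, extQ F one other hother c l x a = 0 →
      q x a = 0 ∧ r x a = 0 := by
    intro x a hpz
    have he := congrFun (congrFun hsum x) a
    simp only [Pi.add_apply, Pi.smul_apply, smul_eq_mul] at he
    rw [hpz] at he
    have h1 : 0 ≤ t * q x a := mul_nonneg ht.le (isLF_nonneg F one q hq x a)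
    have h2 : 0 ≤ u * r x a := mul_nonneg hu.le (isLF_nonneg F one r hr x a)
    have hq' : t * q x a = 0 := by linarith
    have hr' : u * r x a = 0 := by linarith
    exact ⟨(mul_eq_zero.1 hq').resolve_left (ne_of_gt ht),
           (mul_eq_zero.1 hr').resolve_left (ne_of_gt hu)⟩
  have hqK : MemK F one c q :=
    zero_dominated_memK F one other hother c _ q hK hq (fun x a h => (key0 x a h).1)
  have hrK : MemK F one c r :=
    zero_dominated_memK F one other hother c _ r hK hr (fun x a h => (key0 x a h).2)
  have hseg : l ∈ openSegment ℝ (resQ F one q) (resQ F one r) := by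
    refine ⟨t, u, ht, hu, htu, ?_⟩
    funext y b
    have he := congrFun (congrFun hsum y.1) b
    simp only [Pi.add_apply, Pi.smul_apply, smul_eq_mul] at he
    show t * q y.1 b + u * r y.1 b = l y b
    rw [he]
    exact congrFun (congrFun (res_extQ F one other hother c l) y) b
  have hres := hl.2 (res_memK F one c q hqK) (res_memK F one c r hrK) hseg
  rw [← hres]
  exact (extQ_res F one other hother c q hqK).symm

include other hother in
lemma extreme_char (p : (∀ i, M i) → (∀ i, O i) → ℝ)
    (hp : p ∈ Set.extremePoints ℝ
      {p : (∀ i, M i) → (∀ i, O i) → ℝ | IsLF F one p}) :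
    ∃ (c : ∀ i : {j // j ∈ F}, O i.1)
      (l : {x : ∀ i, M i // ∀ i ∈ F, x i ≠ one i} → (∀ i, O i) → ℝ),
      l ∈ Set.extremePoints ℝ
        {q : {x : ∀ i, M i // ∀ i ∈ F, x i ≠ one i} → (∀ i, O i) → ℝ | NSRes F one q} ∧
      p = extQ F one other hother c l := by
  obtain ⟨c, hK⟩ := extreme_memK F one other hother p hp
  refine ⟨c, resQ F one p, ⟨res_memK F one c p hK, ?_⟩,
    (extQ_res F one other hother c p hK).symm⟩
  rintro l1 hl1 l2 hl2 ⟨t, u, ht, hu, htu, hsum⟩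
  have hp1 : p ∈ openSegment ℝ (extQ F one other hother c l1)
      (extQ F one other hother c l2) := by
    refine ⟨t, u, ht, hu, htu, ?_⟩
    rw [← extQ_lin, hsum]
    exact extQ_res F one other hother c p hK
  have h := hp.2
    (memK_isLF F one other hother c _ (memK_extQ F one other hother c l1 hl1))
    (memK_isLF F one other hother c _ (memK_extQ F one other hother c l2 hl2)) hp1
  rw [← h]
  exact (res_extQ F one other hother c l1).symm

include other hother in
lemma extQ_inj (c c' : ∀ i : {j // j ∈ F}, O i.1)
    (l l' : {x : ∀ i, M i // ∀ i ∈ F, x i ≠ one i} → (∀ i, O i) → ℝ)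
    (hl : NSRes F one l) (hl' : NSRes F one l')
    (h : extQ F one other hother c l = extQ F one other hother c' l') :
    c = c' ∧ l = l' := by
  have hcc : c = c' := memK_unique F one c c' (extQ F one other hother c l)
    (memK_extQ F one other hother c l hl)
    (h ▸ memK_extQ F one other hother c' l' hl')
  refine ⟨hcc, ?_⟩
  have := congrArg (resQ F one) h
  rwa [res_extQ, res_extQ] at this

end Part5

end LFCount

/-- the number of extreme points of the LF polytope equals the product of the
numbers of friend outcomes times the number of extreme points of the no-signalling polytope
of the restricted scenario in which no friend-having party uses the query input. -/
theorem lf_extreme_point_count {I : Type} [Fintype I] [DecidableEq I]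
    {M : I → Type} [∀ i, Fintype (M i)] [∀ i, DecidableEq (M i)]
    {O : I → Type} [∀ i, Fintype (O i)] [∀ i, DecidableEq (O i)]
    (hI : 2 ≤ Fintype.card I) (hM : ∀ i, 2 ≤ Fintype.card (M i))
    (hO : ∀ i, 2 ≤ Fintype.card (O i))
    (F : Finset I) (one : ∀ i, M i) :
    Nat.card ↥(Set.extremePoints ℝ
        {p : (∀ i, M i) → (∀ i, O i) → ℝ | IsLF F one p})
      = (∏ i : {j // j ∈ F}, Fintype.card (O i.1)) *
        Nat.card ↥(Set.extremePoints ℝ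
          {q : {x : ∀ i, M i // ∀ i ∈ F, x i ≠ one i} → (∀ i, O i) → ℝ |
            NSRes F one q}) := by
  classical
  haveI hOne : ∀ i, Nonempty (O i) := fun i => Fintype.card_pos_iff.1 (by have := hO i; omega)
  have hex : ∀ i, ∃ m : M i, m ≠ one i := fun i =>
    Fintype.exists_ne_of_one_lt_card (by have := hM i; omega) (one i)
  choose other hot using hex
  set D := (∀ i : {j // j ∈ F}, O i.1) with hD
  set NSs := {q : {x : ∀ i, M i // ∀ i ∈ F, x i ≠ one i} → (∀ i, O i) → ℝ | NSRes F one q}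
    with hNS
  set LFs := {p : (∀ i, M i) → (∀ i, O i) → ℝ | IsLF F one p} with hLF
  let f : D × ↥(Set.extremePoints ℝ NSs) → ↥(Set.extremePoints ℝ LFs) :=
    fun cl => ⟨LFCount.extQ F one other hot cl.1 cl.2.1,
      LFCount.Part5.extQ_extreme F one other hot cl.1 cl.2.1 cl.2.2⟩
  have hbij : Function.Bijective f := by
    constructor
    · rintro ⟨c, l, hl⟩ ⟨c', l', hl'⟩ hfe
      have heq : LFCount.extQ F one other hot c l = LFCount.extQ F one other hot c' l' :=
        congrArg Subtype.val hfe
      obtain ⟨hc, hlv⟩ := LFCount.Part5.extQ_inj F one other hot c c' l l' hl.1 hl'.1 heq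
      exact Prod.ext hc (Subtype.ext hlv)
    · rintro ⟨p, hp⟩
      obtain ⟨c, l, hl, hpe⟩ := LFCount.Part5.extreme_char F one other hot p hp
      exact ⟨(c, ⟨l, hl⟩), Subtype.ext hpe.symm⟩
  rw [← Nat.card_congr (Equiv.ofBijective f hbij), Nat.card_prod,
    Nat.card_eq_fintype_card (α := D), Fintype.card_pi]
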